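/- For n ≥ 2, any independent generating subset of the multiplicative semigroup A^+(B_n) contains exactly one singleton-support element and exactly one full-support (nonzero constant) element. -/

import Mathlib

def Bn (n : ℕ) : Type := Option (Fin n × Fin n)

def Bn.mul {n : ℕ} : Bn n → Bn n → Bn n
  | some (i, j), some (k, l) => if j = k then some (i, l) else none
  | _, _ => none

instance (n : ℕ) : Mul (Bn n) := ⟨Bn.mul⟩

instance (n : ℕ) : Semigroup (Bn n) where
  mul_assoc a b c := by
    show Bn.mul (Bn.mul a b) c = Bn.mul a (Bn.mul b c)
    have h1 : ∀ i j k l : Fin n, Bn.mul (some (i, j)) (some (k, l)) =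
        if j = k then some (i, l) else none := fun _ _ _ _ => rfl
    have h3 : ∀ x : Bn n, Bn.mul x none = none := fun x => by
      rcases x with _ | ⟨_, _⟩ <;> rfl
    rcases a with _ | ⟨i, j⟩ <;> rcases b with _ | ⟨k, l⟩ <;> rcases c with _ | ⟨p, q⟩ <;>
      try rfl
    · exact (h3 _).trans (h3 _).symm ▸ rfl
    · rw [h1, h1]
      by_cases hjk : j = k <;> by_cases hlp : l = p
      · rw [if_pos hjk, if_pos hlp, h1, h1, hjk, if_pos hlp, if_pos rfl]
      · rw [if_pos hjk, if_neg hlp, h1, if_neg hlp]; rfl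
      · rw [if_neg hjk, if_pos hlp, h1, if_neg hjk]; rfl
      · rw [if_neg hjk, if_neg hlp]; rfl

/-- Maps on `Bn n`, composed left-to-right: `x (f * g) = (x f) g`. -/
def MapBn (n : ℕ) : Type := Bn n → Bn n

instance (n : ℕ) : Monoid (MapBn n) where
  mul f g := fun x => g (f x)
  one := fun x => x
  mul_assoc _ _ _ := rfl
  one_mul _ := rfl
  mul_one _ := rfl

/-- The constant map `ξ_c`. -/
def constMap (n : ℕ) (c : Bn n) : MapBn n := fun _ => c

/-- The `n`-support map `(p, q; σ)`, sending `(i, p) ↦ (iσ, q)` and all else to `θ`. -/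
def nSuppMap (n : ℕ) (p q : Fin n) (σ : Equiv.Perm (Fin n)) : MapBn n :=
  fun x =>
    match x with
    | some (i, j) => if j = p then some (σ i, q) else none
    | none => none

instance (n : ℕ) : DecidableEq (Bn n) :=
  inferInstanceAs (DecidableEq (Option (Fin n × Fin n)))

/-- The singleton-support map `((k,l) → (p,q))`. -/
def sglMap (n : ℕ) (k l p q : Fin n) : MapBn n :=
  fun x => @ite _ (x = some (k, l)) (instDecidableEqBn n x (some (k, l))) (some (p, q)) none

/-- The multiplicative semigroup reduct `A⁺(Bₙ)`, as a set of maps on `Bn n`. -/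
def APlus (n : ℕ) : Set (MapBn n) :=
  {f | (∃ c, f = constMap n c) ∨ (∃ p q σ, f = nSuppMap n p q σ) ∨
       (∃ k l p q, f = sglMap n k l p q)}

/-- Independence of a subset of a semigroup. -/
def IndependentIn {S : Type*} [Semigroup S] (U : Set S) : Prop :=
  ∀ a ∈ U, a ∉ Subsemigroup.closure (U \ {a})


section AuxSemigroupBn

variable {n : ℕ}

lemma mapbn_mul_apply (f g : MapBn n) (x : Bn n) : (f * g) x = g (f x) := rfl

lemma bn_some_inj (a b c d : Fin n) : @Eq (Bn n) (some (a,b)) (some (c,d)) ↔ a = c ∧ b = d := by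
  show @Eq (Option (Fin n × Fin n)) _ _ ↔ _
  simp [Prod.ext_iff]

lemma bn_some_eq_none (a b : Fin n) : @Eq (Bn n) (some (a,b)) none ↔ False := by
  show @Eq (Option (Fin n × Fin n)) _ _ ↔ _; simp

lemma bn_none_eq_some (a b : Fin n) : @Eq (Bn n) none (some (a,b)) ↔ False := by
  show @Eq (Option (Fin n × Fin n)) _ _ ↔ _; simp

lemma const_mul' (c : Bn n) (g : MapBn n) : constMap n c * g = constMap n (g c) := rfl

lemma mul_const' (f : MapBn n) (c : Bn n) : f * constMap n c = constMap n c := rfl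

lemma NmulN (p q p' q' : Fin n) (σ τ : Equiv.Perm (Fin n)) :
    nSuppMap n p q σ * nSuppMap n p' q' τ =
      if q = p' then nSuppMap n p q' (σ.trans τ) else constMap n none := by
  funext x
  rcases x with _ | ⟨i, j⟩ <;> by_cases h1 : q = p' <;> try by_cases h2 : j = p
  all_goals erw [mapbn_mul_apply]
  all_goals simp [mapbn_mul_apply, nSuppMap, constMap, bn_some_inj, bn_some_eq_none,
    bn_none_eq_some, Option.some.injEq, Prod.mk.injEq, *]
  all_goals rfl

lemma NmulS (p1 q1 k l p q : Fin n) (σ : Equiv.Perm (Fin n)) :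
    nSuppMap n p1 q1 σ * sglMap n k l p q =
      if q1 = l then sglMap n (σ.symm k) p1 p q else constMap n none := by
  funext x
  rcases x with _ | ⟨i, j⟩ <;> by_cases h1 : q1 = l <;>
    try (by_cases h2 : j = p1 <;> by_cases h3 : σ i = k)
  all_goals erw [mapbn_mul_apply]
  all_goals simp [mapbn_mul_apply, nSuppMap, sglMap, constMap, bn_some_inj, bn_some_eq_none,
    bn_none_eq_some, Option.some.injEq, Prod.mk.injEq, Equiv.eq_symm_apply, *]
  all_goals rfl

lemma SmulN (k l p q p' q' : Fin n) (τ : Equiv.Perm (Fin n)) :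
    sglMap n k l p q * nSuppMap n p' q' τ =
      if q = p' then sglMap n k l (τ p) q' else constMap n none := by
  funext x
  rcases x with _ | ⟨i, j⟩ <;> by_cases h1 : q = p' <;>
    try by_cases hx : i = k ∧ j = l
  all_goals erw [mapbn_mul_apply]
  all_goals simp [mapbn_mul_apply, nSuppMap, sglMap, constMap, bn_some_inj, bn_some_eq_none,
    bn_none_eq_some, Option.some.injEq, Prod.mk.injEq, *]
  all_goals rfl

lemma SmulS (k l p q k' l' p' q' : Fin n) :
    sglMap n k l p q * sglMap n k' l' p' q' =
      if p = k' ∧ q = l' then sglMap n k l p' q' else constMap n none := by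
  funext x
  rcases x with _ | ⟨i, j⟩ <;> by_cases h1 : p = k' <;> by_cases h2 : q = l' <;>
    try by_cases hx : i = k ∧ j = l
  all_goals erw [mapbn_mul_apply]
  all_goals simp [mapbn_mul_apply, sglMap, constMap, bn_some_inj, bn_some_eq_none,
    bn_none_eq_some, Option.some.injEq, Prod.mk.injEq, *]
  all_goals rfl

lemma nsupp_ne_const (hn : 2 ≤ n) (p q : Fin n) (σ : Equiv.Perm (Fin n)) (c : Bn n) :
    nSuppMap n p q σ ≠ constMap n c := by
  intro h
  have h0 : (none : Bn n) = c := congrFun h none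
  have h1 := congrFun h (some (⟨0, by omega⟩, p))
  simp only [nSuppMap, constMap] at h1
  replace h1 := (if_pos trivial).symm.trans h1; rw [← h0] at h1
  exact (bn_some_eq_none _ _).mp h1

lemma sgl_ne_const (k l p q : Fin n) (c : Bn n) : sglMap n k l p q ≠ constMap n c := by
  intro h
  have h0 : (none : Bn n) = c := congrFun h none
  have h1 := congrFun h (some (k, l))
  simp only [sglMap, constMap] at h1
  replace h1 := (if_pos (rfl : (some (k, l) : Bn n) = some (k, l))).symm.trans h1; rw [← h0] at h1
  exact (bn_some_eq_none _ _).mp h1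

lemma sgl_ne_nsupp (hn : 2 ≤ n) (k l p q p' q' : Fin n) (σ : Equiv.Perm (Fin n)) :
    sglMap n k l p q ≠ nSuppMap n p' q' σ := by
  intro h
  have h1 := congrFun h (some (k, l))
  simp only [sglMap, nSuppMap] at h1
  replace h1 := (if_pos (rfl : (some (k, l) : Bn n) = some (k, l))).symm.trans h1
  by_cases hl : l = p'
  · have : Nontrivial (Fin n) := Fin.nontrivial_iff_two_le.mpr hn
    obtain ⟨k2, hkk⟩ := exists_ne k
    have h2 := congrFun h (some (k2, l))
    simp only [sglMap, nSuppMap] at h2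
    erw [if_neg, if_pos hl] at h2
    · exact (bn_none_eq_some _ _).mp h2
    · rw [bn_some_inj]; tauto
  · replace h1 := h1.trans (if_neg hl); exact (bn_some_eq_none _ _).mp h1

/-- f*g is an n-support map only if both factors are. -/
lemma idealN (hn : 2 ≤ n) {f g : MapBn n} (hf : f ∈ APlus n) (hg : g ∈ APlus n)
    (h : ∃ p q σ, f * g = nSuppMap n p q σ) :
    (∃ p q σ, f = nSuppMap n p q σ) ∧ (∃ p q σ, g = nSuppMap n p q σ) := by
  obtain ⟨P, Q, s', h⟩ := h
  rcases hf with ⟨c, rfl⟩ | hfN | ⟨k, l, p, q, rfl⟩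
  · rw [const_mul'] at h
    exact absurd h.symm (nsupp_ne_const hn _ _ _ _)
  · rcases hg with ⟨c, rfl⟩ | hgN | ⟨k, l, p, q, rfl⟩
    · rw [mul_const'] at h
      exact absurd h.symm (nsupp_ne_const hn _ _ _ _)
    · exact ⟨hfN, hgN⟩
    · obtain ⟨p1, q1, σ, rfl⟩ := hfN
      rw [NmulS] at h
      split_ifs at h
      · exact absurd h (sgl_ne_nsupp hn _ _ _ _ _ _ _)
      · exact absurd h.symm (nsupp_ne_const hn _ _ _ _)
  · rcases hg with ⟨c, rfl⟩ | ⟨p', q', τ, rfl⟩ | ⟨k', l', p', q', rfl⟩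
    · rw [mul_const'] at h
      exact absurd h.symm (nsupp_ne_const hn _ _ _ _)
    · rw [SmulN] at h
      split_ifs at h
      · exact absurd h (sgl_ne_nsupp hn _ _ _ _ _ _ _)
      · exact absurd h.symm (nsupp_ne_const hn _ _ _ _)
    · rw [SmulS] at h
      split_ifs at h
      · exact absurd h (sgl_ne_nsupp hn _ _ _ _ _ _ _)
      · exact absurd h.symm (nsupp_ne_const hn _ _ _ _)

/-- Every n-support map lies in the subsemigroup generated by the n-support elements of U. -/
lemma nsupp_mem_closure (hn : 2 ≤ n) (U : Set (MapBn n))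
    (hgen : (Subsemigroup.closure U : Set (MapBn n)) = APlus n)
    {f : MapBn n} (hf : ∃ p q σ, f = nSuppMap n p q σ) :
    f ∈ Subsemigroup.closure {u | u ∈ U ∧ ∃ p q σ, u = nSuppMap n p q σ} := by
  have hfA : f ∈ APlus n := Or.inr (Or.inl hf)
  have hfc : f ∈ Subsemigroup.closure U := by
    rw [← SetLike.mem_coe, hgen]; exact hfA
  have key : ∀ x (hx : x ∈ Subsemigroup.closure U),
      (∃ p q σ, x = nSuppMap n p q σ) →
        x ∈ Subsemigroup.closure {u | u ∈ U ∧ ∃ p q σ, u = nSuppMap n p q σ} := by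
    intro x hx
    induction hx using Subsemigroup.closure_induction with
    | mem y hy => exact fun hN => Subsemigroup.subset_closure ⟨hy, hN⟩
    | mul y z hy hz ihy ihz =>
      intro hN
      have hyA : y ∈ APlus n := by rw [← hgen]; exact hy
      have hzA : z ∈ APlus n := by rw [← hgen]; exact hz
      obtain ⟨hy', hz'⟩ := idealN hn hyA hzA hN
      exact mul_mem (ihy hy') (ihz hz')
  exact key f hfc hf

end AuxSemigroupBn

theorem ind_gen_unique_sgl_const (n : ℕ) (hn : 2 ≤ n) (U : Set (MapBn n))
    (hU : U ⊆ APlus n) (hgen : (Subsemigroup.closure U : Set (MapBn n)) = APlus n)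
    (hind : IndependentIn U) :
    (∃! f, f ∈ U ∧ ∃ k l p q, f = sglMap n k l p q) ∧
    (∃! f, f ∈ U ∧ ∃ c : Bn n, c ≠ none ∧ f = constMap n c) := by
  have e0 : Fin n := ⟨0, by omega⟩
  -- the n-support elements of U generate all n-support maps, and they avoid any
  -- singleton-support or constant element
  have hNsub : ∀ a : MapBn n,
      ((∃ k l p q, a = sglMap n k l p q) ∨ (∃ c, a = constMap n c)) →
      {u | u ∈ U ∧ ∃ p q σ, u = nSuppMap n p q σ} ⊆ U \ {a} := by
    rintro a ha x ⟨hxU, p, q, σ, rfl⟩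
    refine ⟨hxU, ?_⟩
    simp only [Set.mem_singleton_iff]
    rcases ha with ⟨k, l, p', q', rfl⟩ | ⟨c, rfl⟩
    · exact fun h => sgl_ne_nsupp hn k l p' q' p q σ h.symm
    · exact nsupp_ne_const hn p q σ c
  -- existence of a singleton-support element of U
  have hexS : ∃ a ∈ U, ∃ k l p q, a = sglMap n k l p q := by
    by_contra hno
    set K : Subsemigroup (MapBn n) :=
      { carrier := {f | (∃ c, f = constMap n c) ∨ ∃ p q σ, f = nSuppMap n p q σ}
        mul_mem' := by
          rintro f g (⟨c, rfl⟩ | ⟨p, q, σ, rfl⟩) hg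
          · exact Or.inl ⟨g c, const_mul' c g⟩
          · rcases hg with ⟨c, rfl⟩ | ⟨p', q', τ, rfl⟩
            · exact Or.inl ⟨c, mul_const' _ c⟩
            · rw [NmulN]
              split_ifs
              · exact Or.inr ⟨p, q', σ.trans τ, rfl⟩
              · exact Or.inl ⟨none, rfl⟩ } with hK
    have hle : Subsemigroup.closure U ≤ K := by
      rw [Subsemigroup.closure_le]
      intro u hu
      rcases hU hu with hc | hn' | hs
      · exact Or.inl hc
      · exact Or.inr hn'
      · obtain ⟨k, l, p, q, rfl⟩ := hs
        exact (hno ⟨_, hu, k, l, p, q, rfl⟩).elim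
    have hsA : sglMap n e0 e0 e0 e0 ∈ APlus n := Or.inr (Or.inr ⟨e0, e0, e0, e0, rfl⟩)
    have hsc : sglMap n e0 e0 e0 e0 ∈ Subsemigroup.closure U := by
      rw [← SetLike.mem_coe, hgen]; exact hsA
    rcases hle hsc with ⟨c, hc⟩ | ⟨p, q, σ, hs⟩
    · exact sgl_ne_const e0 e0 e0 e0 c hc
    · exact sgl_ne_nsupp hn e0 e0 e0 e0 p q σ hs
  -- existence of a nonzero constant element of U
  have hexC : ∃ a ∈ U, ∃ c : Bn n, c ≠ (none : Bn n) ∧ a = constMap n c := by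
    by_contra hno
    set K : Subsemigroup (MapBn n) :=
      { carrier := {f | f none = none}
        mul_mem' := by
          intro f g hf hg
          show (f * g) none = none
          show g (f none) = none
          rw [show f none = none from hf]
          exact hg } with hK
    have hle : Subsemigroup.closure U ≤ K := by
      rw [Subsemigroup.closure_le]
      intro u hu
      rcases hU hu with ⟨c, rfl⟩ | ⟨p, q, σ, rfl⟩ | ⟨k, l, p, q, rfl⟩
      · show constMap n c none = none
        by_cases hc : c = none
        · rw [hc]; rfl
        · exact (hno ⟨_, hu, c, hc, rfl⟩).elim
      · rfl
      · show sglMap n k l p q none = none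
        simp only [sglMap]
        exact if_neg (fun h => (bn_none_eq_some k l).mp h)
    have hcA : constMap n (some (e0, e0)) ∈ APlus n := Or.inl ⟨some (e0, e0), rfl⟩
    have hcc : constMap n (some (e0, e0)) ∈ Subsemigroup.closure U := by
      rw [← SetLike.mem_coe, hgen]; exact hcA
    have := hle hcc
    exact (bn_some_eq_none e0 e0).mp this
  obtain ⟨a, haU, ha⟩ := hexS
  obtain ⟨b, hbU, hb⟩ := hexC
  constructor
  · refine ⟨a, ⟨haU, ha⟩, ?_⟩
    rintro g ⟨hgU, k', l', p', q', rfl⟩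
    by_contra hne
    obtain ⟨k, l, p, q, rfl⟩ := ha
    -- a = u * g * v for suitable n-support maps u, v
    have hu : nSuppMap n l l' (Equiv.swap k k') ∈ Subsemigroup.closure (U \ {sglMap n k l p q}) :=
      Subsemigroup.closure_mono (hNsub _ (Or.inl ⟨k, l, p, q, rfl⟩))
        (nsupp_mem_closure hn U hgen ⟨l, l', Equiv.swap k k', rfl⟩)
    have hv : nSuppMap n q' q (Equiv.swap p' p) ∈ Subsemigroup.closure (U \ {sglMap n k l p q}) :=
      Subsemigroup.closure_mono (hNsub _ (Or.inl ⟨k, l, p, q, rfl⟩))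
        (nsupp_mem_closure hn U hgen ⟨q', q, Equiv.swap p' p, rfl⟩)
    have hg' : sglMap n k' l' p' q' ∈ Subsemigroup.closure (U \ {sglMap n k l p q}) := by
      apply Subsemigroup.subset_closure
      exact ⟨hgU, fun h => hne h⟩
    have key : nSuppMap n l l' (Equiv.swap k k') * sglMap n k' l' p' q' *
        nSuppMap n q' q (Equiv.swap p' p) = sglMap n k l p q := by
      rw [NmulS, if_pos rfl, Equiv.symm_swap, Equiv.swap_apply_right,
        SmulN, if_pos rfl, Equiv.swap_apply_left]
    have : sglMap n k l p q ∈ Subsemigroup.closure (U \ {sglMap n k l p q}) := by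
      have hm := mul_mem (mul_mem hu hg') hv
      rwa [key] at hm
    exact hind _ haU this
  · refine ⟨b, ⟨hbU, hb⟩, ?_⟩
    rintro g ⟨hgU, d, hd, rfl⟩
    by_contra hne
    obtain ⟨c, hc, rfl⟩ := hb
    rcases c with _ | ⟨cp, cq⟩
    · exact absurd rfl hc
    rcases d with _ | ⟨dp, dq⟩
    · exact absurd rfl hd
    have hu : nSuppMap n dq cq (Equiv.swap dp cp) ∈
        Subsemigroup.closure (U \ {constMap n (some (cp, cq))}) :=
      Subsemigroup.closure_mono (hNsub _ (Or.inr ⟨some (cp, cq), rfl⟩))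
        (nsupp_mem_closure hn U hgen ⟨dq, cq, Equiv.swap dp cp, rfl⟩)
    have hg' : constMap n (some (dp, dq)) ∈
        Subsemigroup.closure (U \ {constMap n (some (cp, cq))}) := by
      apply Subsemigroup.subset_closure
      exact ⟨hgU, fun h => hne h⟩
    have harg : nSuppMap n dq cq (Equiv.swap dp cp) (some (dp, dq)) = some (cp, cq) := by
      show (if dq = dq then some ((Equiv.swap dp cp) dp, cq) else none) = some (cp, cq)
      rw [if_pos rfl, Equiv.swap_apply_left]
    have key : constMap n (some (dp, dq)) * nSuppMap n dq cq (Equiv.swap dp cp) =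
        constMap n (some (cp, cq)) := by
      exact (const_mul' _ _).trans (congrArg (constMap n) harg)
    have : constMap n (some (cp, cq)) ∈
        Subsemigroup.closure (U \ {constMap n (some (cp, cq))}) := by
      have hm := mul_mem hg' hu
      rwa [key] at hm
    exact hind _ hbU this
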